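/- Every d-degenerate graph G has a strong ω-decomposition isomorphic to G of width at most d+1. Concretely: G admits an acyclic orientation with all indegrees at most d, and if each vertex v is replaced by the bag {v} ∪ N⁻(v), then every clique of G is contained in some bag, and for every vertex v the set of bags containing v induces a connected subgraph of G. -/

import Mathlib

open SimpleGraph

/-- A graph is `d`-degenerate if every nonempty subgraph has a vertex of degree at most `d`. -/
def Degenerate {V : Type*} (d : ℕ) (G : SimpleGraph V) : Prop :=
  ∀ H : G.Subgraph, H.verts.Nonempty → ∃ v ∈ H.verts, (H.neighborSet v).ncard ≤ d

/-- `o` is an acyclic orientation of `G`: each edge is directed in exactly one way,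
and there is no directed cycle. -/
structure IsAcyclicOrientation {V : Type*} (G : SimpleGraph V) (o : V → V → Prop) : Prop where
  orient : ∀ v w, G.Adj v w ↔ (o v w ∨ o w v)
  antisymm : ∀ v w, o v w → ¬ o w v
  acyclic : ∀ v, ¬ Relation.TransGen o v v

lemma deg_aux {V : Type*} (G : SimpleGraph V) (d : ℕ) (hdeg : Degenerate d G)
    (s : Finset V) (hs : s.Nonempty) :
    ∃ v ∈ s, (G.neighborSet v ∩ ↑s).ncard ≤ d := by
  classical
  obtain ⟨x, hx⟩ := hs
  let H : G.Subgraph :=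
    { verts := ↑s
      Adj := fun a b => G.Adj a b ∧ a ∈ s ∧ b ∈ s
      adj_sub := fun h => h.1
      edge_vert := fun h => h.2.1
      symm := ⟨fun a b h => ⟨h.1.symm, h.2.2, h.2.1⟩⟩ }
  obtain ⟨v, hv, hvd⟩ := hdeg H ⟨x, by exact hx⟩
  have hv' : v ∈ s := hv
  refine ⟨v, hv', ?_⟩
  have heq : G.neighborSet v ∩ ↑s = H.neighborSet v := by
    ext w
    simp only [Set.mem_inter_iff, SimpleGraph.mem_neighborSet,
      SimpleGraph.Subgraph.mem_neighborSet, Finset.mem_coe, H]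
    tauto
  rw [heq]; exact hvd

lemma order_aux {V : Type*} [DecidableEq V] (G : SimpleGraph V) (d : ℕ)
    (hdeg : Degenerate d G) (s : Finset V) :
    ∃ f : V → ℕ, Set.InjOn f ↑s ∧
      ∀ v ∈ s, {w : V | w ∈ s ∧ G.Adj v w ∧ f v < f w}.ncard ≤ d := by
  classical
  induction s using Finset.strongInduction with
  | _ s ih =>
    rcases s.eq_empty_or_nonempty with rfl | hs
    · exact ⟨fun _ => 0, by simp [Set.InjOn], by simp⟩
    obtain ⟨v, hv, hvd⟩ := deg_aux G d hdeg s hs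
    obtain ⟨f', hinj', hbd'⟩ := ih (s.erase v) (Finset.erase_ssubset hv)
    refine ⟨fun w => if w = v then 0 else f' w + 1, ?_, ?_⟩
    · intro a ha b hb hab
      by_cases hav : a = v <;> by_cases hbv : b = v <;>
        simp [hav, hbv] at hab ⊢
      · exact hinj' (by simp [Finset.mem_erase, hav, ha]) (by simp [Finset.mem_erase, hbv, hb]) hab
    · intro w hw
      by_cases hwv : w = v
      · subst hwv
        refine le_trans (Set.ncard_le_ncard ?_ (Set.toFinite _)) hvd
        intro u hu
        exact ⟨hu.2.1, hu.1⟩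
      · have heq : {u : V | u ∈ s ∧ G.Adj w u ∧
            (if w = v then 0 else f' w + 1) < (if u = v then 0 else f' u + 1)} =
            {u : V | u ∈ s.erase v ∧ G.Adj w u ∧ f' w < f' u} := by
          ext u
          simp only [Set.mem_setOf_eq, Finset.mem_erase, if_neg hwv]
          constructor
          · rintro ⟨hus, hadj, hlt⟩
            by_cases huv : u = v
            · rw [if_pos huv] at hlt; omega
            · rw [if_neg huv] at hlt
              exact ⟨⟨huv, hus⟩, hadj, by omega⟩
          · rintro ⟨⟨huv, hus⟩, hadj, hlt⟩
            refine ⟨hus, hadj, ?_⟩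
            rw [if_neg huv]; omega
        simp only [heq]
        exact hbd' w (Finset.mem_erase.2 ⟨hwv, hw⟩)

theorem stmt2 {V : Type*} [Fintype V] (G : SimpleGraph V) (d : ℕ)
    (hdeg : Degenerate d G) :
    ∃ o : V → V → Prop, IsAcyclicOrientation G o ∧
      (∀ v : V, {w : V | o w v}.ncard ≤ d) ∧
      (∀ v : V, (insert v {w : V | o w v} : Set V).ncard ≤ d + 1) ∧
      (∀ s : Finset V, s.Nonempty → G.IsClique ↑s →
        ∃ u : V, (↑s : Set V) ⊆ insert u {w : V | o w u}) ∧
      (∀ v : V, (G.induce {u : V | v ∈ insert u {w : V | o w u}}).Connected) := by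
  classical
  obtain ⟨f, hinj, hbd⟩ := order_aux G d hdeg Finset.univ
  have hinj' : Function.Injective f := fun a b h => hinj (by simp) (by simp) h
  refine ⟨fun a b => G.Adj a b ∧ f b < f a, ⟨?_, ?_, ?_⟩, ?_, ?_, ?_, ?_⟩
  · intro v w
    constructor
    · intro h
      rcases lt_or_gt_of_ne (fun he => h.ne (hinj' he)) with hlt | hlt
      · exact Or.inr ⟨h.symm, hlt⟩
      · exact Or.inl ⟨h, hlt⟩
    · rintro (⟨h, _⟩ | ⟨h, _⟩); exacts [h, h.symm]
  · rintro v w ⟨_, h1⟩ ⟨_, h2⟩; omega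
  · intro v hv
    have key : ∀ a b, Relation.TransGen (fun a b => G.Adj a b ∧ f b < f a) a b → f b < f a := by
      intro a b h
      induction h with
      | single h => exact h.2
      | tail _ h ih => omega
    exact absurd (key v v hv) (lt_irrefl _)
  · intro v
    have heq : {w : V | (fun a b => G.Adj a b ∧ f b < f a) w v} =
        {w : V | w ∈ Finset.univ ∧ G.Adj v w ∧ f v < f w} := by
      ext w; simp only [Set.mem_setOf_eq, Finset.mem_univ, true_and]
      exact ⟨fun h => ⟨h.1.symm, h.2⟩, fun h => ⟨h.1.symm, h.2⟩⟩
    rw [heq]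
    exact hbd v (Finset.mem_univ v)
  · intro v
    have hv : v ∉ {w : V | (fun a b => G.Adj a b ∧ f b < f a) w v} := by
      simp [SimpleGraph.irrefl]
    rw [Set.ncard_insert_of_notMem hv (Set.toFinite _)]
    have heq : {w : V | (fun a b => G.Adj a b ∧ f b < f a) w v} =
        {w : V | w ∈ Finset.univ ∧ G.Adj v w ∧ f v < f w} := by
      ext w; simp only [Set.mem_setOf_eq, Finset.mem_univ, true_and]
      exact ⟨fun h => ⟨h.1.symm, h.2⟩, fun h => ⟨h.1.symm, h.2⟩⟩
    rw [heq]
    have := hbd v (Finset.mem_univ v)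
    omega
  · intro s hs hclique
    obtain ⟨u, hu, hmin⟩ := s.exists_min_image f hs
    refine ⟨u, ?_⟩
    intro x hx
    by_cases hxu : x = u
    · exact Or.inl hxu
    · right
      have hadj : G.Adj u x := hclique hu hx fun h => hxu h.symm
      have : f u < f x := lt_of_le_of_ne (hmin x hx) (fun he => hxu (hinj' he.symm))
      exact ⟨hadj.symm, this⟩
  · intro v
    set S : Set V := {u : V | v ∈ insert u {w : V | G.Adj w u ∧ f u < f w}} with hS
    have hvS : v ∈ S := by simp [hS]
    rw [SimpleGraph.connected_iff]
    constructor
    · intro a b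
      have step : ∀ c : S, (G.induce S).Reachable ⟨v, hvS⟩ c := by
        rintro ⟨c, hc⟩
        by_cases hcv : c = v
        · subst hcv; rfl
        · have hc' : G.Adj v c ∧ f c < f v := by
            simp only [hS, Set.mem_insert_iff, Set.mem_setOf_eq] at hc
            rcases hc with h | h
            · exact absurd h.symm hcv
            · exact h
          have hadj : (G.induce S).Adj ⟨v, hvS⟩ ⟨c, hc⟩ := hc'.1
          exact hadj.reachable
      exact (step a).symm.trans (step b)
    · exact ⟨⟨v, hvS⟩⟩
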